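/- Let F be a field of characteristic zero and q ∈ F nonzero and not a root of unity. Every nonzero rational function R ∈ F(x) admits a factorization R(x) = z · (a(x)/b(x)) · (c(qx)/c(x)) where z ∈ F is nonzero, a, b, c ∈ F[x] are monic, gcd(a(x), b(q^n x)) = 1 for all n ∈ ℕ, gcd(a(x), c(x)) = 1, gcd(b(x), c(qx)) = 1, and c(0) ≠ 0. -/
import Mathlib

open Polynomial

namespace QGosper

variable {F : Type*} [Field F]

/-- The substitution `x ↦ q x`. -/
noncomputable def sh (q : F) (p : F[X]) : F[X] := p.comp (Polynomial.C q * X)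

lemma sh_mul (q : F) (p r : F[X]) : sh q (p * r) = sh q p * sh q r :=
  mul_comp p r _

lemma sh_C (q z : F) : sh q (Polynomial.C z) = Polynomial.C z := C_comp

lemma sh_sh (u v : F) (p : F[X]) : sh u (sh v p) = sh (v * u) p := by
  unfold sh
  rw [comp_assoc, mul_comp, C_comp, X_comp, ← mul_assoc, ← C_mul]

lemma sh_one' (p : F[X]) : sh (1 : F) p = p := by
  simp [sh]

lemma natDegree_sh {q : F} (hq : q ≠ 0) (p : F[X]) : (sh q p).natDegree = p.natDegree := by
  unfold sh
  rw [natDegree_comp, natDegree_C_mul_X _ hq, mul_one]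

lemma leadingCoeff_sh {q : F} (hq : q ≠ 0) (p : F[X]) :
    (sh q p).leadingCoeff = p.leadingCoeff * q ^ p.natDegree := by
  unfold sh
  rw [leadingCoeff_comp (by rw [natDegree_C_mul_X _ hq]; exact one_ne_zero)]
  congr 1
  rw [leadingCoeff_mul, leadingCoeff_C, leadingCoeff_X, mul_one]

lemma sh_ne_zero {q : F} (hq : q ≠ 0) {p : F[X]} (hp : p ≠ 0) : sh q p ≠ 0 := by
  rw [← leadingCoeff_ne_zero, leadingCoeff_sh hq]
  exact mul_ne_zero (leadingCoeff_ne_zero.mpr hp) (pow_ne_zero _ hq)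

lemma eval_zero_sh (q : F) (p : F[X]) : (sh q p).eval 0 = p.eval 0 := by
  simp [sh, eval_comp]

lemma sh_dvd (q : F) {p r : F[X]} (h : p ∣ r) : sh q p ∣ sh q r := by
  obtain ⟨t, rfl⟩ := h
  exact ⟨sh q t, sh_mul q p t⟩

lemma sh_prod (q : F) {ι : Type*} (s : Finset ι) (f : ι → F[X]) :
    sh q (∏ i ∈ s, f i) = ∏ i ∈ s, sh q (f i) :=
  prod_comp s f _

/-- Transfer the cleared-denominator equation from one configuration to another,
given a polynomial identity relating them. -/
lemma transfer (R : RatFunc F) (z z1 : F) (a b a' b' c2 c c2' c' : F[X])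
    (hb : b ≠ 0) (hc : c ≠ 0)
    (hold : R * algebraMap F[X] (RatFunc F) b * algebraMap F[X] (RatFunc F) c
      = RatFunc.C z * algebraMap F[X] (RatFunc F) a * algebraMap F[X] (RatFunc F) c2)
    (hpoly : Polynomial.C z1 * a' * c2' * b * c = Polynomial.C z * a * c2 * b' * c') :
    R * algebraMap F[X] (RatFunc F) b' * algebraMap F[X] (RatFunc F) c'
      = RatFunc.C z1 * algebraMap F[X] (RatFunc F) a' * algebraMap F[X] (RatFunc F) c2' := by
  have hbc : algebraMap F[X] (RatFunc F) (b * c) ≠ 0 :=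
    RatFunc.algebraMap_ne_zero (mul_ne_zero hb hc)
  apply mul_right_cancel₀ hbc
  have h2 := congrArg (algebraMap F[X] (RatFunc F)) hpoly
  simp only [map_mul, RatFunc.algebraMap_C] at h2 ⊢
  linear_combination (algebraMap F[X] (RatFunc F) b' * algebraMap F[X] (RatFunc F) c') * hold - h2

end QGosper
theorem qGosper_form_exists (F : Type*) [Field F] [CharZero F] (q : F)
    (hq : q ≠ 0) (hq1 : ∀ n : ℕ, 0 < n → q ^ n ≠ 1)
    (R : RatFunc F) (hR : R ≠ 0) :
    ∃ (z : F) (a b c : Polynomial F), z ≠ 0 ∧ a.Monic ∧ b.Monic ∧ c.Monic ∧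
      (∀ n : ℕ, IsCoprime a (b.comp (Polynomial.C (q ^ n) * Polynomial.X))) ∧
      IsCoprime a c ∧
      IsCoprime b (c.comp (Polynomial.C q * Polynomial.X)) ∧
      c.eval 0 ≠ 0 ∧
      R = RatFunc.C z *
          (algebraMap (Polynomial F) (RatFunc F) a / algebraMap (Polynomial F) (RatFunc F) b) *
          (algebraMap (Polynomial F) (RatFunc F) (c.comp (Polynomial.C q * Polynomial.X)) /
            algebraMap (Polynomial F) (RatFunc F) c) := by
  classical
  -- the set of "valid configurations" with cleared denominators
  let A := algebraMap (Polynomial F) (RatFunc F)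
  let V : F → Polynomial F → Polynomial F → Polynomial F → Prop := fun z a b c =>
    z ≠ 0 ∧ a.Monic ∧ b.Monic ∧ c.Monic ∧ c.eval 0 ≠ 0 ∧
      R * A b * A c = RatFunc.C z * A a * A (QGosper.sh q c)
  -- existence of a valid configuration
  have hex : ∃ z a b c, V z a b c := by
    have hnum : R.num ≠ 0 := RatFunc.num_ne_zero hR
    have hz : R.num.leadingCoeff ≠ 0 := leadingCoeff_ne_zero.mpr hnum
    refine ⟨R.num.leadingCoeff, Polynomial.C R.num.leadingCoeff⁻¹ * R.num, R.denom, 1,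
      hz, ?_, R.monic_denom, monic_one, by simp, ?_⟩
    · unfold Polynomial.Monic
      rw [leadingCoeff_mul, leadingCoeff_C, inv_mul_cancel₀ hz]
    · have hden : A R.denom ≠ 0 := RatFunc.algebraMap_ne_zero (R.denom_ne_zero)
      have h1 : R * A R.denom = A R.num := by
        have h := RatFunc.num_div_denom R
        rw [div_eq_iff hden] at h
        exact h.symm
      rw [show QGosper.sh q (1 : Polynomial F) = 1 from one_comp, map_one, mul_one, mul_one,
        h1, map_mul, RatFunc.algebraMap_C, ← mul_assoc, ← RatFunc.C.map_mul,
        mul_inv_cancel₀ hz, RatFunc.C.map_one, one_mul]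
  -- pick a configuration minimizing first deg a + deg b, then deg c
  have hex1 : ∃ m, ∃ z a b c, V z a b c ∧ a.natDegree + b.natDegree = m := by
    obtain ⟨z, a, b, c, h⟩ := hex
    exact ⟨_, z, a, b, c, h, rfl⟩
  obtain ⟨z0, a0, b0, c0, hV0, hm0⟩ := Nat.find_spec hex1
  have hex2 : ∃ k, ∃ z a b c, (V z a b c ∧ a.natDegree + b.natDegree = Nat.find hex1)
      ∧ c.natDegree = k := ⟨_, z0, a0, b0, c0, ⟨hV0, hm0⟩, rfl⟩
  obtain ⟨z, a, b, c, ⟨hV, hm1⟩, hm2⟩ := Nat.find_spec hex2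
  have min1 : ∀ z' a' b' c', V z' a' b' c' →
      a.natDegree + b.natDegree ≤ a'.natDegree + b'.natDegree := by
    intro z' a' b' c' h
    rw [hm1]
    by_contra hlt
    exact Nat.find_min hex1 (lt_of_not_ge hlt) ⟨z', a', b', c', h, rfl⟩
  have min2 : ∀ z' a' b' c', V z' a' b' c' →
      a'.natDegree + b'.natDegree = a.natDegree + b.natDegree →
      c.natDegree ≤ c'.natDegree := by
    intro z' a' b' c' h hsum
    rw [hm2]
    by_contra hlt
    exact Nat.find_min hex2 (lt_of_not_ge hlt) ⟨z', a', b', c', ⟨h, by rw [hsum, hm1]⟩, rfl⟩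
  obtain ⟨hz, hma, hmb, hmc, hc0, heq⟩ := hV
  have ha0 : a ≠ 0 := hma.ne_zero
  have hb0 : b ≠ 0 := hmb.ne_zero
  have hcne : c ≠ 0 := hmc.ne_zero
  -- first coprimality condition
  have key1 : ∀ n : ℕ, IsCoprime a (QGosper.sh (q ^ n) b) := by
    intro n
    by_contra hcop
    have hqn : (q : F) ^ n ≠ 0 := pow_ne_zero _ hq
    set B := QGosper.sh (q ^ n) b with hB
    have hB0 : B ≠ 0 := QGosper.sh_ne_zero hqn hb0
    have hgu : ¬ IsUnit (gcd a B) := fun h => hcop ((gcd_isUnit_iff _ _).mp h)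
    set p := gcd a B with hp
    have hpa : p ∣ a := gcd_dvd_left _ _
    have hpB : p ∣ B := gcd_dvd_right _ _
    have hpne : p ≠ 0 := fun h => ha0 (zero_dvd_iff.mp (h ▸ hpa))
    have hpm : p.Monic := by
      have := Polynomial.monic_normalize (p := p) hpne
      rwa [normalize_gcd] at this
    have hpdeg : 0 < p.natDegree := hpm.natDegree_pos.mpr (fun h => hgu (h ▸ isUnit_one))
    obtain ⟨a1, ha1⟩ := hpa
    have hma1 : a1.Monic := hpm.of_mul_monic_left (ha1 ▸ hma)
    have ha10 : a1 ≠ 0 := hma1.ne_zero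
    by_cases hpe : p.eval 0 = 0
    · -- then X divides both a and b ; cancel X from both
      have hxp : (X : Polynomial F) ∣ p :=
        X_dvd_iff.mpr (by rw [coeff_zero_eq_eval_zero]; exact hpe)
      have hxa : (X : Polynomial F) ∣ a := dvd_trans hxp (Dvd.intro a1 ha1.symm)
      have hxB : (X : Polynomial F) ∣ B := dvd_trans hxp hpB
      have hbe : b.eval 0 = 0 := by
        have h0 : B.eval 0 = 0 := by
          obtain ⟨t, ht⟩ := hxB
          rw [ht, eval_mul, eval_X, zero_mul]
        rwa [hB, QGosper.eval_zero_sh] at h0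
      have hxb : (X : Polynomial F) ∣ b :=
        X_dvd_iff.mpr (by rw [coeff_zero_eq_eval_zero]; exact hbe)
      obtain ⟨a2, ha2⟩ := hxa
      obtain ⟨b2, hb2⟩ := hxb
      have hma2 : a2.Monic := monic_X.of_mul_monic_left (ha2 ▸ hma)
      have hmb2 : b2.Monic := monic_X.of_mul_monic_left (hb2 ▸ hmb)
      have hnew : V z a2 b2 c := by
        refine ⟨hz, hma2, hmb2, hmc, hc0, ?_⟩
        refine QGosper.transfer R z z a b a2 b2 (QGosper.sh q c) c (QGosper.sh q c) c
          hb0 hcne heq ?_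
        rw [ha2, hb2]; ring
      have h1 := min1 z a2 b2 c hnew
      have hda : a.natDegree = a2.natDegree + 1 := by
        rw [ha2, natDegree_mul X_ne_zero hma2.ne_zero, natDegree_X]; ring
      have hdb : b.natDegree = b2.natDegree + 1 := by
        rw [hb2, natDegree_mul X_ne_zero hmb2.ne_zero, natDegree_X]; ring
      omega
    · -- main case : p(0) ≠ 0, move a telescoping product into c
      set s := q⁻¹ with hs
      have hs0 : s ≠ 0 := inv_ne_zero hq
      set D : ℕ → Polynomial F := fun i => QGosper.sh (s ^ i) p with hD
      have hDdef : ∀ i, D i = QGosper.sh (s ^ i) p := fun i => by rw [hD]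
      have hD0 : ∀ i, D i ≠ 0 := fun i => by
        rw [hDdef]; exact QGosper.sh_ne_zero (pow_ne_zero i hs0) hpne
      have hDdeg : ∀ i, (D i).natDegree = p.natDegree := fun i => by
        rw [hDdef]; exact QGosper.natDegree_sh (pow_ne_zero i hs0) p
      have hDe : ∀ i, (D i).eval 0 = p.eval 0 := fun i => by
        rw [hDdef]; exact QGosper.eval_zero_sh _ p
      have hD00 : D 0 = p := by rw [hDdef, pow_zero, QGosper.sh_one']
      have hshD : ∀ i, QGosper.sh q (D (i + 1)) = D i := by
        intro i
        rw [hDdef, hDdef, QGosper.sh_sh]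
        congr 1
        rw [hs, pow_succ, mul_assoc, inv_mul_cancel₀ hq, mul_one]
      have hDnb : D n ∣ b := by
        have h1 : QGosper.sh (s ^ n) p ∣ QGosper.sh (s ^ n) B := QGosper.sh_dvd _ hpB
        rw [hB, QGosper.sh_sh, ← mul_pow, mul_inv_cancel₀ hq, one_pow, QGosper.sh_one'] at h1
        rw [hDdef]
        exact h1
      obtain ⟨h, hbfac⟩ := hDnb
      have hh0 : h ≠ 0 := by
        intro h0; exact hb0 (by rw [hbfac, h0, mul_zero])
      set κ := (D n).leadingCoeff with hκ
      have hκ0 : κ ≠ 0 := leadingCoeff_ne_zero.mpr (hD0 n)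
      set e := ∏ i ∈ Finset.range n, D (i + 1) with he
      have he0 : e ≠ 0 := Finset.prod_ne_zero_iff.mpr fun i _ => hD0 _
      have hlce : e.leadingCoeff ≠ 0 := leadingCoeff_ne_zero.mpr he0
      have hshe : QGosper.sh q e = ∏ i ∈ Finset.range n, D i := by
        rw [he, QGosper.sh_prod]
        exact Finset.prod_congr rfl fun i _ => hshD i
      have hepe : e * p = QGosper.sh q e * D n := by
        rw [hshe, ← Finset.prod_range_succ, Finset.prod_range_succ' D n, hD00, he]
      set b' := Polynomial.C κ * h with hb'
      have hmb' : b'.Monic := by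
        unfold Polynomial.Monic
        have h1 : κ * h.leadingCoeff = 1 := by
          rw [← leadingCoeff_mul, ← hbfac]; exact hmb
        rw [hb', leadingCoeff_mul, leadingCoeff_C]; exact h1
      set c' := Polynomial.C e.leadingCoeff⁻¹ * (c * e) with hc'
      have hmc' : c'.Monic := by
        unfold Polynomial.Monic
        rw [hc', leadingCoeff_mul, leadingCoeff_mul, leadingCoeff_C, hmc.leadingCoeff, one_mul,
          inv_mul_cancel₀ hlce]
      have hc'0 : c'.eval 0 ≠ 0 := by
        have hee : e.eval 0 ≠ 0 := by
          rw [he, eval_prod]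
          exact Finset.prod_ne_zero_iff.mpr fun i _ => by rw [hDe]; exact hpe
        rw [hc', eval_mul, eval_mul, eval_C]
        exact mul_ne_zero (inv_ne_zero hlce) (mul_ne_zero hc0 hee)
      have hσc' : QGosper.sh q c'
          = Polynomial.C e.leadingCoeff⁻¹ * (QGosper.sh q c * QGosper.sh q e) := by
        rw [hc', QGosper.sh_mul, QGosper.sh_mul, QGosper.sh_C]
      have hnew : V (z * κ) a1 b' c' := by
        refine ⟨mul_ne_zero hz hκ0, hma1, hmb', hmc', hc'0, ?_⟩
        refine QGosper.transfer R z (z * κ) a b a1 b' (QGosper.sh q c) c (QGosper.sh q c') c'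
          hb0 hcne heq ?_
        rw [Polynomial.C_mul, hσc', hb', hc', ha1, hbfac]
        linear_combination (-(Polynomial.C z * Polynomial.C κ * Polynomial.C e.leadingCoeff⁻¹ *
          a1 * QGosper.sh q c * c * h)) * hepe
      have h1 := min1 (z * κ) a1 b' c' hnew
      have hda : a.natDegree = p.natDegree + a1.natDegree := by
        rw [ha1, natDegree_mul hpne ha10]
      have hdb : b.natDegree = p.natDegree + h.natDegree := by
        rw [hbfac, natDegree_mul (hD0 n) hh0, hDdeg]
      have hdb' : b'.natDegree = h.natDegree := by
        rw [hb', natDegree_mul (Polynomial.C_ne_zero.mpr hκ0) hh0, natDegree_C, zero_add]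
      omega
  -- second coprimality condition
  have key2 : IsCoprime a c := by
    by_contra hcop
    have hgu : ¬ IsUnit (gcd a c) := fun h => hcop ((gcd_isUnit_iff _ _).mp h)
    set p := gcd a c with hp
    have hpa : p ∣ a := gcd_dvd_left _ _
    have hpc : p ∣ c := gcd_dvd_right _ _
    have hpne : p ≠ 0 := fun h => ha0 (zero_dvd_iff.mp (h ▸ hpa))
    have hpm : p.Monic := by
      have := Polynomial.monic_normalize (p := p) hpne
      rwa [normalize_gcd] at this
    have hpdeg : 0 < p.natDegree := hpm.natDegree_pos.mpr (fun h => hgu (h ▸ isUnit_one))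
    obtain ⟨a1, ha1⟩ := hpa
    obtain ⟨c1, hc1⟩ := hpc
    have hma1 : a1.Monic := hpm.of_mul_monic_left (ha1 ▸ hma)
    have hmc1 : c1.Monic := hpm.of_mul_monic_left (hc1 ▸ hmc)
    have ha10 : a1 ≠ 0 := hma1.ne_zero
    have hc10 : c1 ≠ 0 := hmc1.ne_zero
    have hc10' : c1.eval 0 ≠ 0 := by
      intro h0; exact hc0 (by rw [hc1, eval_mul, h0, mul_zero])
    set d := p.natDegree with hd
    set w := q ^ d with hw
    have hw0 : w ≠ 0 := pow_ne_zero _ hq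
    set t := QGosper.sh q p with ht
    have hlt : t.leadingCoeff = w := by
      rw [ht, QGosper.leadingCoeff_sh hq, hpm.leadingCoeff, one_mul]
    have ht0 : t ≠ 0 := QGosper.sh_ne_zero hq hpne
    set a' := Polynomial.C w⁻¹ * (a1 * t) with ha'
    have hma' : a'.Monic := by
      unfold Polynomial.Monic
      rw [ha', leadingCoeff_mul, leadingCoeff_mul, leadingCoeff_C, hma1.leadingCoeff,
        hlt, one_mul, inv_mul_cancel₀ hw0]
    have hσc : QGosper.sh q c = t * QGosper.sh q c1 := by
      rw [hc1, QGosper.sh_mul, ht]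
    have hCw : Polynomial.C w * Polynomial.C w⁻¹ = 1 := by
      rw [← Polynomial.C_mul, mul_inv_cancel₀ hw0, Polynomial.C_1]
    have hnew : V (z * w) a' b c1 := by
      refine ⟨mul_ne_zero hz hw0, hma', hmb, hmc1, hc10', ?_⟩
      refine QGosper.transfer R z (z * w) a b a' b (QGosper.sh q c) c (QGosper.sh q c1) c1
        hb0 hcne heq ?_
      rw [Polynomial.C_mul, ha', hσc, ha1, hc1]
      linear_combination (Polynomial.C z * a1 * t * QGosper.sh q c1 * b * p * c1) * hCw
    have hdeg_a : a.natDegree = d + a1.natDegree := by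
      rw [ha1, natDegree_mul hpne ha10]
    have hdeg_t : t.natDegree = d := by rw [ht]; exact QGosper.natDegree_sh hq p
    have hdeg_a' : a'.natDegree = a.natDegree := by
      rw [ha', natDegree_mul (Polynomial.C_ne_zero.mpr (inv_ne_zero hw0)) (mul_ne_zero ha10 ht0),
        natDegree_mul ha10 ht0, natDegree_C, hdeg_t, hdeg_a]
      ring
    have hdeg_c : c.natDegree = d + c1.natDegree := by
      rw [hc1, natDegree_mul hpne hc10]
    have h1 := min2 (z * w) a' b c1 hnew (by rw [hdeg_a'])
    omega
  -- third coprimality condition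
  have key3 : IsCoprime b (QGosper.sh q c) := by
    by_contra hcop
    have hgu : ¬ IsUnit (gcd b (QGosper.sh q c)) := fun h => hcop ((gcd_isUnit_iff _ _).mp h)
    set p := gcd b (QGosper.sh q c) with hp
    have hpb : p ∣ b := gcd_dvd_left _ _
    have hpc : p ∣ QGosper.sh q c := gcd_dvd_right _ _
    have hpne : p ≠ 0 := fun h => hb0 (zero_dvd_iff.mp (h ▸ hpb))
    have hpm : p.Monic := by
      have := Polynomial.monic_normalize (p := p) hpne
      rwa [normalize_gcd] at this
    have hpdeg : 0 < p.natDegree := hpm.natDegree_pos.mpr (fun h => hgu (h ▸ isUnit_one))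
    obtain ⟨b1, hb1⟩ := hpb
    obtain ⟨g, hg⟩ := hpc
    have hmb1 : b1.Monic := hpm.of_mul_monic_left (hb1 ▸ hmb)
    have hb10 : b1 ≠ 0 := hmb1.ne_zero
    have hqi : (q⁻¹ : F) ≠ 0 := inv_ne_zero hq
    set P1 := QGosper.sh q⁻¹ p with hP1
    set H1 := QGosper.sh q⁻¹ g with hH1
    have hcfac : c = P1 * H1 := by
      have h2 : QGosper.sh q⁻¹ (QGosper.sh q c) = c := by
        rw [QGosper.sh_sh, mul_inv_cancel₀ hq, QGosper.sh_one']
      rw [← h2, hg, QGosper.sh_mul, hP1, hH1]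
    have hshP1 : QGosper.sh q P1 = p := by
      rw [hP1, QGosper.sh_sh, inv_mul_cancel₀ hq, QGosper.sh_one']
    have hσc2 : QGosper.sh q c = p * QGosper.sh q H1 := by
      rw [hcfac, QGosper.sh_mul, hshP1]
    have hP10 : P1 ≠ 0 := QGosper.sh_ne_zero hqi hpne
    have hH10 : H1 ≠ 0 := by
      intro h0; exact hcne (by rw [hcfac, h0, mul_zero])
    set d := p.natDegree with hd
    set w := q ^ d with hw
    have hw0 : w ≠ 0 := pow_ne_zero _ hq
    have hlcP1 : P1.leadingCoeff = w⁻¹ := by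
      rw [hP1, QGosper.leadingCoeff_sh hqi, hpm.leadingCoeff, one_mul, inv_pow, hw, hd]
    have hlcH1 : H1.leadingCoeff = w := by
      have h1 : P1.leadingCoeff * H1.leadingCoeff = 1 := by
        rw [← leadingCoeff_mul, ← hcfac]; exact hmc
      rw [hlcP1] at h1
      exact ((inv_mul_eq_one₀ hw0).mp h1).symm
    set b' := Polynomial.C w * (b1 * P1) with hb'
    set c' := Polynomial.C w⁻¹ * H1 with hc'
    have hmb' : b'.Monic := by
      unfold Polynomial.Monic
      rw [hb', leadingCoeff_mul, leadingCoeff_mul, leadingCoeff_C, hmb1.leadingCoeff,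
        hlcP1, one_mul, mul_inv_cancel₀ hw0]
    have hmc' : c'.Monic := by
      unfold Polynomial.Monic
      rw [hc', leadingCoeff_mul, leadingCoeff_C, hlcH1, inv_mul_cancel₀ hw0]
    have hc'0 : c'.eval 0 ≠ 0 := by
      have hH1e : H1.eval 0 ≠ 0 := by
        intro h0
        exact hc0 (by rw [hcfac, eval_mul, h0, mul_zero])
      rw [hc', eval_mul, eval_C]
      exact mul_ne_zero (inv_ne_zero hw0) hH1e
    have hσc' : QGosper.sh q c' = Polynomial.C w⁻¹ * QGosper.sh q H1 := by
      rw [hc', QGosper.sh_mul, QGosper.sh_C]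
    have hnew : V (z * w) a b' c' := by
      refine ⟨mul_ne_zero hz hw0, hma, hmb', hmc', hc'0, ?_⟩
      refine QGosper.transfer R z (z * w) a b a b' (QGosper.sh q c) c (QGosper.sh q c') c'
        hb0 hcne heq ?_
      rw [Polynomial.C_mul, hσc', hσc2, hb', hc', hb1, hcfac]
      ring
    have hdeg_P1 : P1.natDegree = d := by rw [hP1]; exact QGosper.natDegree_sh hqi p
    have hdeg_b : b.natDegree = d + b1.natDegree := by
      rw [hb1, natDegree_mul hpne hb10]
    have hdeg_b' : b'.natDegree = b.natDegree := by
      rw [hb', natDegree_mul (Polynomial.C_ne_zero.mpr hw0) (mul_ne_zero hb10 hP10),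
        natDegree_mul hb10 hP10, natDegree_C, hdeg_P1, hdeg_b]
      ring
    have hdeg_c : c.natDegree = d + H1.natDegree := by
      rw [hcfac, natDegree_mul hP10 hH10, hdeg_P1]
    have hdeg_c' : c'.natDegree = H1.natDegree := by
      rw [hc', natDegree_mul (Polynomial.C_ne_zero.mpr (inv_ne_zero hw0)) hH10, natDegree_C,
        zero_add]
    have h1 := min2 (z * w) a b' c' hnew (by rw [hdeg_b'])
    omega
  refine ⟨z, a, b, c, hz, hma, hmb, hmc, key1, key2, key3, hc0, ?_⟩
  have hAb : A b ≠ 0 := RatFunc.algebraMap_ne_zero hb0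
  have hAc : A c ≠ 0 := RatFunc.algebraMap_ne_zero hcne
  show R = RatFunc.C z * (A a / A b) * (A (QGosper.sh q c) / A c)
  field_simp
  linear_combination heq
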